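/- For all natural numbers n and p, the number of anchored chains ∅ ⊊ N₀ ⊊ ⋯ ⊊ N_p ⊆ Fin(n+1) of Finsets of Fin(n+1) equals ∑_{k=p}^{n} C(n+1, k+1) · b⁺(k,p), where b⁺(k,p) is the number of anchored full chains ∅ ⊊ N₀ ⊊ ⋯ ⊊ N_p = Fin(k+1) of Finsets of Fin(k+1), and C(a,b) denotes the binomial coefficient Nat.choose a b. -/

import Mathlib

/-- `b⁺(k,p)`: the number of anchored full chains
`∅ ⊊ N₀ ⊊ ⋯ ⊊ N_p = Fin (k+1)` of Finsets of `Fin (k+1)`. -/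
noncomputable def bplus (k p : ℕ) : ℕ :=
  Nat.card {c : Fin (p + 1) → Finset (Fin (k + 1)) //
    StrictMono c ∧ c 0 ≠ ∅ ∧ c (Fin.last p) = Finset.univ}

lemma chain_card_lb {n p : ℕ} {c : Fin (p + 1) → Finset (Fin (n + 1))}
    (hm : StrictMono c) (h0 : c 0 ≠ ∅) (i : Fin (p + 1)) : i.1 + 1 ≤ (c i).card := by
  induction i using Fin.induction with
  | zero =>
    simpa [Finset.one_le_card, Finset.nonempty_iff_ne_empty] using h0
  | succ i ih =>
    have h1 : c i.castSucc ⊂ c i.succ := hm Fin.castSucc_lt_succ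
    have h2 := Finset.card_lt_card h1
    have h3 : (i.castSucc : ℕ) = (i : ℕ) := rfl
    simp only [Fin.val_succ]
    omega

lemma fiber_card {n p k : ℕ} (T : Finset (Fin (n + 1))) (h : T.card = k + 1) :
    Nat.card {c : Fin (p + 1) → Finset (Fin (n + 1)) //
      StrictMono c ∧ c 0 ≠ ∅ ∧ c (Fin.last p) = T} = bplus k p := by
  classical
  set f := (T.orderEmbOfFin h).toEmbedding with hf
  set F : Finset (Fin (k + 1)) → Finset (Fin (n + 1)) := fun S => S.map f with hF
  have hFinj : Function.Injective F := Finset.map_injective f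
  have hFss : ∀ {S S' : Finset (Fin (k + 1))}, F S ⊂ F S' ↔ S ⊂ S' :=
    fun {S S'} => Finset.map_ssubset_map
  have hFuniv : F Finset.univ = T := by
    ext x
    simp only [hF, Finset.mem_map, Finset.mem_univ, true_and]
    constructor
    · rintro ⟨a, _, rfl⟩; exact T.orderEmbOfFin_mem h a
    · intro hx
      have : x ∈ Set.range (T.orderEmbOfFin h) := by
        rw [Finset.range_orderEmbOfFin]; exact hx
      obtain ⟨a, ha⟩ := this
      exact ⟨a, ha⟩
  have hFsub : ∀ S, F S ⊆ T := by
    intro S x hx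
    simp only [hF, Finset.mem_map] at hx
    obtain ⟨a, _, rfl⟩ := hx
    exact T.orderEmbOfFin_mem h a
  set Φ : {c : Fin (p + 1) → Finset (Fin (k + 1)) //
      StrictMono c ∧ c 0 ≠ ∅ ∧ c (Fin.last p) = Finset.univ} →
      {c : Fin (p + 1) → Finset (Fin (n + 1)) //
      StrictMono c ∧ c 0 ≠ ∅ ∧ c (Fin.last p) = T} :=
    fun c => ⟨fun i => F (c.1 i), fun a b hab => hFss.2 (c.2.1 hab),
      by
        intro hcontra
        apply c.2.2.1
        apply hFinj
        show F (c.1 0) = F ∅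
        rw [show F (c.1 0) = ∅ from hcontra]
        simp [hF],
      by show F (c.1 (Fin.last p)) = T; rw [c.2.2.2, hFuniv]⟩ with hΦ
  have hbij : Function.Bijective Φ := by
    constructor
    · rintro ⟨c, hc⟩ ⟨c', hc'⟩ hcc
      simp only [hΦ, Subtype.mk.injEq] at hcc ⊢
      funext i
      exact hFinj (congrFun hcc i)
    · rintro ⟨c, hm, h0, ht⟩
      have hsub : ∀ i, c i ⊆ T := by
        intro i
        rw [← ht]
        exact hm.monotone (Fin.le_last i)
      have hinj : Set.InjOn f (f ⁻¹' (c · : Fin (p+1) → Set (Fin (n+1))) 0) := by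
        exact (f.injective).injOn
      set d : Fin (p + 1) → Finset (Fin (k + 1)) :=
        fun i => (c i).preimage f (f.injective.injOn) with hd
      have hFd : ∀ i, F (d i) = c i := by
        intro i
        ext x
        simp only [hF, hd, Finset.mem_map, Finset.mem_preimage]
        constructor
        · rintro ⟨a, ha, rfl⟩; exact ha
        · intro hx
          have hxT : x ∈ T := hsub i hx
          have : x ∈ Set.range (T.orderEmbOfFin h) := by
            rw [Finset.range_orderEmbOfFin]; exact hxT
          obtain ⟨a, ha⟩ := this
          exact ⟨a, by rw [show f a = x from ha]; exact hx, ha⟩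
      refine ⟨⟨d, ?_, ?_, ?_⟩, ?_⟩
      · intro a b hab
        have : F (d a) ⊂ F (d b) := by rw [hFd, hFd]; exact hm hab
        exact hFss.1 this
      · intro hcontra
        apply h0
        rw [← hFd 0, hcontra]
        simp [hF]
      · apply hFinj
        rw [hFd, hFuniv, ht]
      · simp only [hΦ, Subtype.mk.injEq]
        funext i
        exact hFd i
  exact (Nat.card_congr (Equiv.ofBijective Φ hbij)).symm

theorem anchored_chains_decomposition (n p : ℕ) :
    Nat.card {c : Fin (p + 1) → Finset (Fin (n + 1)) // StrictMono c ∧ c 0 ≠ ∅} =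
      ∑ k ∈ Finset.Icc p n, Nat.choose (n + 1) (k + 1) * bplus k p := by
  classical
  set g : ℕ → ℕ := fun j => if p + 1 ≤ j then bplus (j - 1) p else 0 with hg
  have key : ∀ T : Finset (Fin (n + 1)),
      Nat.card {c : Fin (p + 1) → Finset (Fin (n + 1)) //
        StrictMono c ∧ c 0 ≠ ∅ ∧ c (Fin.last p) = T} = g T.card := by
    intro T
    by_cases hT : p + 1 ≤ T.card
    · have hk : T.card = (T.card - 1) + 1 := by omega
      rw [hg]
      simp only [hT, if_true]
      exact fiber_card T hk
    · have : IsEmpty {c : Fin (p + 1) → Finset (Fin (n + 1)) //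
          StrictMono c ∧ c 0 ≠ ∅ ∧ c (Fin.last p) = T} := by
        constructor
        rintro ⟨c, hm, h0, ht⟩
        have := chain_card_lb hm h0 (Fin.last p)
        rw [ht] at this
        simp [Fin.val_last] at this
        omega
      rw [Nat.card_of_isEmpty, hg]
      simp [hT]
  -- decompose by top set
  have hsigma : Nat.card {c : Fin (p + 1) → Finset (Fin (n + 1)) // StrictMono c ∧ c 0 ≠ ∅} = ∑ T : Finset (Fin (n + 1)),
      Nat.card {c : Fin (p + 1) → Finset (Fin (n + 1)) //
        StrictMono c ∧ c 0 ≠ ∅ ∧ c (Fin.last p) = T} := by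
    have e : {c : Fin (p + 1) → Finset (Fin (n + 1)) // StrictMono c ∧ c 0 ≠ ∅} ≃ Σ T : Finset (Fin (n + 1)), {c : Fin (p + 1) → Finset (Fin (n + 1)) //
        StrictMono c ∧ c 0 ≠ ∅ ∧ c (Fin.last p) = T} := by
      refine (Equiv.sigmaFiberEquiv
        (fun c : {c : Fin (p + 1) → Finset (Fin (n + 1)) // StrictMono c ∧ c 0 ≠ ∅} =>
          c.1 (Fin.last p))).symm.trans ?_
      apply Equiv.sigmaCongrRight
      intro T
      exact (Equiv.subtypeSubtypeEquivSubtypeInter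
        (fun c : Fin (p + 1) → Finset (Fin (n + 1)) => StrictMono c ∧ c 0 ≠ ∅)
        (fun c => c (Fin.last p) = T)).trans
        (Equiv.subtypeEquivRight (by tauto))
    rw [Nat.card_congr e, Nat.card_eq_fintype_card, Fintype.card_sigma]
    exact Finset.sum_congr rfl fun T _ => (Nat.card_eq_fintype_card).symm
  rw [hsigma]
  clear hsigma
  simp_rw [key]
  have h1 : ∑ T : Finset (Fin (n + 1)), g T.card
      = ∑ j ∈ Finset.range (n + 2), (n + 1).choose j • g j := by
    rw [← Finset.powerset_univ, Finset.sum_powerset]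
    rw [Finset.card_univ, Fintype.card_fin]
    apply Finset.sum_congr rfl
    intro j _
    rw [Finset.sum_powersetCard j Finset.univ g, Finset.card_univ, Fintype.card_fin]
  rw [h1]
  have h2 : ∑ j ∈ Finset.range (n + 2), (n + 1).choose j • g j
      = ∑ j ∈ Finset.Icc (p + 1) (n + 1), (n + 1).choose j • g j := by
    have hsub : Finset.Icc (p + 1) (n + 1) ⊆ Finset.range (n + 2) := by
      intro j hj
      simp only [Finset.mem_Icc] at hj
      rw [Finset.mem_range]
      omega
    have hzero : ∀ j ∈ Finset.range (n + 2), j ∉ Finset.Icc (p + 1) (n + 1) →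
        (n + 1).choose j • g j = 0 := by
      intro j hj hj'
      simp only [Finset.mem_Icc, not_and_or, not_le] at hj'
      rw [Finset.mem_range] at hj
      have : ¬ (p + 1 ≤ j) := by omega
      simp only [hg, if_neg this, smul_eq_mul, mul_zero]
    exact (Finset.sum_subset hsub hzero).symm
  rw [h2]
  have m1 : ∀ j ∈ Finset.Icc (p + 1) (n + 1), j - 1 ∈ Finset.Icc p n := by
    intro j hj; simp only [Finset.mem_Icc] at hj ⊢; omega
  have m2 : ∀ k ∈ Finset.Icc p n, k + 1 ∈ Finset.Icc (p + 1) (n + 1) := by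
    intro k hk; simp only [Finset.mem_Icc] at hk ⊢; omega
  have m3 : ∀ j ∈ Finset.Icc (p + 1) (n + 1), (j - 1) + 1 = j := by
    intro j hj; simp only [Finset.mem_Icc] at hj; omega
  have m4 : ∀ k ∈ Finset.Icc p n, (k + 1) - 1 = k := by
    intro k _; omega
  have m5 : ∀ j ∈ Finset.Icc (p + 1) (n + 1),
      (n + 1).choose j • g j = (n + 1).choose ((j - 1) + 1) * bplus (j - 1) p := by
    intro j hj
    simp only [Finset.mem_Icc] at hj
    have h3 : p + 1 ≤ j := hj.1
    have h4 : j - 1 + 1 = j := by omega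
    simp only [hg, if_pos h3, smul_eq_mul, h4]
  exact Finset.sum_nbij' (fun j => j - 1) (fun k => k + 1) m1 m2 m3 m4 m5
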